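/- If two invertible n×n real matrices A and B are effectively equivalent (det(I + xA) = det(I + xB) for all diagonal x), then A⁻¹ and B⁻¹ are effectively equivalent. -/

import Mathlib

open Matrix

lemma key_det_add {n : ℕ} (A B : Matrix (Fin n) (Fin n) ℝ)
    (heq : ∀ x : Matrix (Fin n) (Fin n) ℝ, x.IsDiag →
      (1 + x * A).det = (1 + x * B).det) :
    ∀ x : Matrix (Fin n) (Fin n) ℝ, x.IsDiag →
      (x + A).det = (x + B).det := by
  intro x hx
  set d : Fin n → ℝ := fun i => x i i with hd
  have hxd : x = Matrix.diagonal d := by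
    ext i j
    by_cases h : i = j
    · subst h; simp [Matrix.diagonal, hd]
    · simp [Matrix.diagonal_apply_ne _ h, hx h]
  set f : ℝ → ℝ := fun ε => (Matrix.diagonal (fun i => d i + ε) + A).det with hf
  set g : ℝ → ℝ := fun ε => (Matrix.diagonal (fun i => d i + ε) + B).det with hg
  have hs : Dense {ε : ℝ | ∀ i, d i + ε ≠ 0} := by
    have hfin : ({ε : ℝ | ¬ ∀ i, d i + ε ≠ 0}).Finite := by
      apply Set.Finite.subset (Set.finite_range (fun i => -d i))
      intro ε hε
      push_neg at hε
      obtain ⟨i, hi⟩ := hε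
      exact ⟨i, by simp; linarith⟩
    have := hfin.countable.dense_compl ℝ
    convert this using 1
    ext ε; simp
  have hcf : Continuous f := by
    apply Continuous.matrix_det
    apply Continuous.add _ continuous_const
    apply continuous_matrix
    intro i j
    by_cases h : i = j
    · subst h; simp only [Matrix.diagonal_apply_eq]; fun_prop
    · simpa [Matrix.diagonal_apply_ne _ h] using continuous_const (y := (0:ℝ))
  have hcg : Continuous g := by
    apply Continuous.matrix_det
    apply Continuous.add _ continuous_const
    apply continuous_matrix
    intro i j
    by_cases h : i = j
    · subst h; simp only [Matrix.diagonal_apply_eq]; fun_prop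
    · simpa [Matrix.diagonal_apply_ne _ h] using continuous_const (y := (0:ℝ))
  have heqon : Set.EqOn f g {ε : ℝ | ∀ i, d i + ε ≠ 0} := by
    intro ε hε
    set y : Matrix (Fin n) (Fin n) ℝ := Matrix.diagonal (fun i => d i + ε) with hy
    have hyu : IsUnit y.det := by
      rw [hy, Matrix.det_diagonal]
      exact (Finset.prod_ne_zero_iff.mpr (fun i _ => hε i)).isUnit
    have hyinv : (y⁻¹).IsDiag := by
      rw [hy, Matrix.inv_diagonal]
      exact Matrix.isDiag_diagonal _
    have hfactA : y + A = y * (1 + y⁻¹ * A) := by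
      rw [Matrix.mul_add, mul_one, ← Matrix.mul_assoc, Matrix.mul_nonsing_inv _ hyu, one_mul]
    have hfactB : y + B = y * (1 + y⁻¹ * B) := by
      rw [Matrix.mul_add, mul_one, ← Matrix.mul_assoc, Matrix.mul_nonsing_inv _ hyu, one_mul]
    show (y + A).det = (y + B).det
    rw [hfactA, hfactB, Matrix.det_mul, Matrix.det_mul, heq _ hyinv]
  have hfg : f = g := hcf.ext_on hs hcg heqon
  have h0 := congrFun hfg 0
  simp only [hf, hg] at h0
  have hxd' : x = Matrix.diagonal (fun i => x i i) := hxd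
  simpa [← hxd', hd] using h0

/-- Effective equivalence of invertible matrices passes to their inverses. -/
theorem stmt_10 {n : ℕ} (A B : Matrix (Fin n) (Fin n) ℝ)
    (hA : IsUnit A.det) (hB : IsUnit B.det)
    (heq : ∀ x : Matrix (Fin n) (Fin n) ℝ, x.IsDiag →
      (1 + x * A).det = (1 + x * B).det) :
    ∀ x : Matrix (Fin n) (Fin n) ℝ, x.IsDiag →
      (1 + x * A⁻¹).det = (1 + x * B⁻¹).det := by
  intro x hx
  have key := key_det_add A B heq
  have hAB : A.det = B.det := by
    have := key 0 (fun i j _ => rfl)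
    simpa using this
  have hfA : 1 + x * A⁻¹ = (x + A) * A⁻¹ := by
    rw [Matrix.add_mul, Matrix.mul_nonsing_inv _ hA, add_comm]
  have hfB : 1 + x * B⁻¹ = (x + B) * B⁻¹ := by
    rw [Matrix.add_mul, Matrix.mul_nonsing_inv _ hB, add_comm]
  rw [hfA, hfB, Matrix.det_mul, Matrix.det_mul, key x hx,
    Matrix.det_nonsing_inv, Matrix.det_nonsing_inv, hAB]
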